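/- Let m, d, N be positive integers with d < m, let Ẋ_1, …, Ẋ_N be m×d real matrices each of full column rank d, and let (e_1, …, e_m) be a basis of ℝ^m. If for every t ∈ {1, …, m} there exists an index j_t ∈ {1, …, N} with Ẋ_{j_t}ᵀ ·ᵥ e_t = 0, then N·(m − d) ≥ m. (Hence the conditional support of the discrete instrument must contain at least ⌈(T−1)/(T−1−d_x)⌉ points.) -/

import Mathlib

open Matrix

lemma finrank_finset_sup_le {ι : Type*} {V : Type*} [AddCommGroup V] [Module ℝ V]
    [FiniteDimensional ℝ V] (s : Finset ι) (K : ι → Submodule ℝ V) :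
    Module.finrank ℝ (s.sup K : Submodule ℝ V) ≤ ∑ i ∈ s, Module.finrank ℝ (K i) := by
  classical
  induction s using Finset.induction_on with
  | empty => simp
  | insert a t h ih =>
    rw [Finset.sup_insert, Finset.sum_insert h]
    exact le_trans (Submodule.finrank_add_le_finrank_add_finrank _ _)
      (by omega)

/-- Counting bound: if a basis `(e_t)` of `ℝ^m` is such that each `e_t` is orthogonal to
all columns of some full-column-rank `m × d` matrix `Ẋ_{j_t}` out of `N` given matrices,
then `N·(m − d) ≥ m`. -/
theorem support_point_count_bound
    (m d N : ℕ) (hd : 0 < d) (hdm : d < m) (hN : 0 < N)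
    (Xdot : Fin N → Matrix (Fin m) (Fin d) ℝ)
    (hrank : ∀ j, (Xdot j).rank = d)
    (e : Module.Basis (Fin m) ℝ (Fin m → ℝ))
    (he : ∀ t : Fin m, ∃ j : Fin N, (Xdot j)ᵀ *ᵥ e t = 0) :
    m ≤ N * (m - d) := by
  classical
  set K : Fin N → Submodule ℝ (Fin m → ℝ) :=
    fun j => LinearMap.ker ((Xdot j)ᵀ.mulVecLin) with hK
  have hKrank : ∀ j, Module.finrank ℝ (K j) = m - d := by
    intro j
    have h1 : Module.finrank ℝ (LinearMap.range ((Xdot j)ᵀ.mulVecLin))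
        + Module.finrank ℝ (K j) = m := by
      rw [LinearMap.finrank_range_add_finrank_ker]
      simp
    have h2 : Module.finrank ℝ (LinearMap.range ((Xdot j)ᵀ.mulVecLin)) = d := by
      have := (Xdot j).rank_transpose
      rw [hrank j] at this
      exact this
    omega
  have htop : (⊤ : Submodule ℝ (Fin m → ℝ)) ≤ Finset.univ.sup K := by
    rw [← e.span_eq]
    apply Submodule.span_le.mpr
    rintro x ⟨t, rfl⟩
    obtain ⟨j, hj⟩ := he t
    exact Finset.le_sup (f := K) (Finset.mem_univ j) (LinearMap.mem_ker.mpr hj)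
  have h1 := Submodule.finrank_mono htop
  have h2 := finrank_finset_sup_le Finset.univ K
  simp only [hKrank, Finset.sum_const, Finset.card_univ, Fintype.card_fin, smul_eq_mul] at h2
  have h3 : Module.finrank ℝ (⊤ : Submodule ℝ (Fin m → ℝ)) = m := by simp
  omega
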